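/- Let D be a delta-matroid on [n] and let M be an enveloping matroid for D. Then an admissible set S on [n] is independent in the matroid M (i.e., the subset S⁺×{+} ∪ S⁻×{−} of the ground set [n]×{+,−} is independent in M) if and only if S is independent in D. -/

import Mathlib

open Finset
open scoped symmDiff

/-- The rank-type function of a nonempty family `G` of subsets of `Fin n`, evaluated on an
admissible set `(Sp, Sn)`: `max_{F ∈ G} (|Sp ∩ F| + |Sn \ F| − |Sn ∩ F| − |Sp \ F|)`.
(Junk value `0` when the family is empty.) -/
noncomputable def gFam {n : ℕ} (G : Finset (Finset (Fin n))) (Sp Sn : Finset (Fin n)) : ℤ :=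
  if h : G.Nonempty then
    G.sup' h fun F => ((Sp ∩ F).card : ℤ) + ((Sn \ F).card : ℤ)
      - ((Sn ∩ F).card : ℤ) - ((Sp \ F).card : ℤ)
  else 0

/-- A delta-matroid on `[n]`: a nonempty family of subsets of `Fin n` (each `F` encoding the
size-`n` admissible set `(F, [n] \ F)`), satisfying the symmetric exchange axiom. -/
structure DeltaMatroid (n : ℕ) where
  feas : Finset (Finset (Fin n))
  nonempty : feas.Nonempty
  exchange : ∀ F₁ ∈ feas, ∀ F₂ ∈ feas, ∀ x ∈ F₁ ∆ F₂, ∃ y ∈ F₁ ∆ F₂, F₁ ∆ {x, y} ∈ feas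

/-- The rank function `g_D` of a delta-matroid, on admissible sets `(Sp, Sn)`. -/
noncomputable def DeltaMatroid.g {n : ℕ} (D : DeltaMatroid n) :
    Finset (Fin n) → Finset (Fin n) → ℤ :=
  gFam D.feas

/-- The linear map `env : ℝ^([n]×{+,−}) → ℝ^n`, `env(x)_i = x_{(i,+)} − x_{(i,−)}`,
with `+` encoded as `true` and `−` as `false`. -/
def envMap {n : ℕ} (x : Fin n × Bool → ℝ) : Fin n → ℝ := fun i => x (i, true) - x (i, false)

/-- The polytope `P(D) ⊆ ℝ^n` of a delta-matroid: the convex hull of the points `e_F`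
for `F` feasible, where `(e_F)_i = 1` if `i ∈ F` and `−1` otherwise. -/
noncomputable def deltaPolytope {n : ℕ} (D : DeltaMatroid n) : Set (Fin n → ℝ) :=
  convexHull ℝ ((fun F : Finset (Fin n) => fun i => if i ∈ F then (1 : ℝ) else -1) '' ↑D.feas)

/-- A matroid `M` on `[n]×{+,−}` is an enveloping matroid for the delta-matroid `D` if its
ground set is everything and `env(P(M)) = P(D)`, where `P(M)` is the convex hull of the 0/1
indicator vectors of the bases of `M`. -/
noncomputable def IsEnveloping {n : ℕ} (M : Matroid (Fin n × Bool)) (D : DeltaMatroid n) : Prop :=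
  M.E = Set.univ ∧
    envMap '' (convexHull ℝ
        {x : Fin n × Bool → ℝ | ∃ B, M.IsBase B ∧ x = B.indicator fun _ => (1 : ℝ)})
      = deltaPolytope D


section EnvelopingAux

open Matroid Set

open scoped Classical

variable {n : ℕ}

/-- The admissible subset of the doubled ground set determined by `(Sp, Sn)`. -/
def adm (Sp Sn : Finset (Fin n)) : Set (Fin n × Bool) :=
  ((↑Sp : Set (Fin n)) ×ˢ ({true} : Set Bool)) ∪ ((↑Sn : Set (Fin n)) ×ˢ ({false} : Set Bool))

/-- The linear functional on `ℝ^n` attached to `(Sp, Sn)`. -/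
noncomputable def psi (Sp Sn : Finset (Fin n)) (y : Fin n → ℝ) : ℝ :=
  ∑ i ∈ Sp, y i - ∑ i ∈ Sn, y i

/-- The vertex of the cube attached to a subset `F`. -/
def eVec (F : Finset (Fin n)) : Fin n → ℝ := fun i => if i ∈ F then 1 else -1

lemma psi_linear (Sp Sn : Finset (Fin n)) : IsLinearMap ℝ (psi Sp Sn) := by
  constructor
  · intro x y
    simp only [psi, Pi.add_apply, Finset.sum_add_distrib]
    ring
  · intro c x
    simp only [psi, Pi.smul_apply, smul_eq_mul, ← Finset.mul_sum]
    ring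

lemma phi_linear (Sp Sn : Finset (Fin n)) :
    IsLinearMap ℝ (fun x : Fin n × Bool → ℝ => psi Sp Sn (envMap x)) := by
  constructor
  · intro x y
    have h : envMap (x + y) = envMap x + envMap y := by
      funext i; simp [envMap]; ring
    rw [h, (psi_linear Sp Sn).map_add]
  · intro c x
    have h : envMap (c • x) = c • envMap x := by
      funext i; simp [envMap, smul_eq_mul]; ring
    rw [h, (psi_linear Sp Sn).map_smul]

lemma sum_ind (B : Set (Fin n × Bool)) (A : Finset (Fin n)) (b : Bool) :
    ∑ i ∈ A, (B.indicator (fun _ => (1 : ℝ)) (i, b))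
      = (((A.filter fun i => (i, b) ∈ B)).card : ℝ) := by
  classical
  rw [Finset.card_filter]
  push_cast
  refine Finset.sum_congr rfl fun i _ => ?_
  simp [Set.indicator_apply]

lemma interProdNcard (B : Set (Fin n × Bool)) (A : Finset (Fin n)) (b : Bool) :
    (B ∩ ((↑A : Set (Fin n)) ×ˢ ({b} : Set Bool))).ncard
      = ((A.filter fun i => (i, b) ∈ B)).card := by
  classical
  have h : B ∩ ((↑A : Set (Fin n)) ×ˢ ({b} : Set Bool))
      = ↑(((A.filter fun i => (i, b) ∈ B)).image fun i => (i, b)) := by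
    ext ⟨i, c⟩
    simp only [Set.mem_inter_iff, Set.mem_prod, Finset.coe_image, Set.mem_image, Finset.mem_coe,
      Finset.mem_filter, Set.mem_singleton_iff]
    constructor
    · rintro ⟨hB, hA, rfl⟩
      exact ⟨i, ⟨hA, hB⟩, rfl⟩
    · rintro ⟨j, ⟨hA, hB⟩, h⟩
      cases h
      exact ⟨hB, hA, rfl⟩
  rw [h, Set.ncard_coe_finset, Finset.card_image_of_injective _
    (fun a a' hh => congrArg Prod.fst hh)]

lemma ncard_inter_adm (B : Set (Fin n × Bool)) (Sp Sn : Finset (Fin n)) :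
    (B ∩ adm Sp Sn).ncard
      = ((Sp.filter fun i => (i, true) ∈ B)).card + ((Sn.filter fun i => (i, false) ∈ B)).card := by
  classical
  rw [adm, Set.inter_union_distrib_left, Set.ncard_union_eq ?_ (Set.toFinite _) (Set.toFinite _),
    interProdNcard, interProdNcard]
  rw [Set.disjoint_left]
  rintro ⟨i, c⟩ ⟨-, -, h1⟩ ⟨-, -, h2⟩
  simp only [Set.mem_singleton_iff] at h1 h2
  rw [h1] at h2
  exact Bool.noConfusion h2

lemma psi_env_ind (B : Set (Fin n × Bool)) (Sp Sn : Finset (Fin n)) :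
    psi Sp Sn (envMap (B.indicator fun _ => (1 : ℝ)))
      = ((B ∩ adm Sp Sn).ncard : ℝ) - ((B ∩ adm Sn Sp).ncard : ℝ) := by
  classical
  rw [ncard_inter_adm, ncard_inter_adm, psi]
  simp only [envMap]
  rw [Finset.sum_sub_distrib, Finset.sum_sub_distrib, sum_ind, sum_ind, sum_ind, sum_ind]
  push_cast
  ring

lemma sum_eVec (F A : Finset (Fin n)) :
    ∑ i ∈ A, eVec F i = ((A ∩ F).card : ℝ) - ((A \ F).card : ℝ) := by
  classical
  simp only [eVec]
  rw [← Finset.sum_filter_add_sum_filter_not A (fun i => i ∈ F)]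
  have h1 : A.filter (fun i => i ∈ F) = A ∩ F := Finset.filter_mem_eq_inter
  have h2 : A.filter (fun i => ¬ i ∈ F) = A \ F := by
    ext i; simp [Finset.mem_sdiff]
  rw [h1, h2]
  rw [Finset.sum_congr rfl (fun i hi => if_pos (Finset.mem_inter.mp hi).2),
    Finset.sum_congr rfl (fun i hi => if_neg (Finset.mem_sdiff.mp hi).2)]
  simp [nsmul_eq_mul]
  ring

lemma psi_eVec (Sp Sn F : Finset (Fin n)) :
    psi Sp Sn (eVec F)
      = ((Sp ∩ F).card : ℝ) + ((Sn \ F).card : ℝ) - ((Sn ∩ F).card : ℝ) - ((Sp \ F).card : ℝ) := by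
  rw [psi, sum_eVec, sum_eVec]
  ring


lemma ncard_le_basis {α : Type*} [Finite α] {M : Matroid α} {A X J : Set α}
    (hA : M.Indep A) (hAX : A ⊆ X) (hJ : M.IsBasis J X) : A.ncard ≤ J.ncard := by
  obtain ⟨J', hJ', hAJ'⟩ := hA.subset_isBasis_of_subset hAX hJ.subset_ground
  have h := hJ'.encard_eq_encard hJ
  calc A.ncard ≤ J'.ncard := Set.ncard_le_ncard hAJ' J'.toFinite
    _ = J.ncard := by rw [Set.ncard_def, Set.ncard_def, h]

lemma ident_le {α : Type*} [Finite α] {M : Matroid α} {I I' J K B₀ : Set α}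
    (hJ : M.IsBasis J I) (hK : M.IsBasis K I'ᶜ) (hB₀ : M.IsBase B₀) {B : Set α} (hB : M.IsBase B) :
    ((B ∩ I).ncard : ℤ) - ((B ∩ I').ncard : ℤ)
      ≤ (J.ncard : ℤ) + (K.ncard : ℤ) - (B₀.ncard : ℤ) := by
  have h1 : (B ∩ I).ncard ≤ J.ncard :=
    ncard_le_basis (hB.indep.inter_right I) Set.inter_subset_right hJ
  have h2 : (B \ I').ncard ≤ K.ncard :=
    ncard_le_basis (hB.indep.diff I') (fun x hx => hx.2) hK
  have h3 : (B ∩ I').ncard + (B \ I').ncard = B.ncard :=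
    Set.ncard_inter_add_ncard_diff_eq_ncard B I' B.toFinite
  have h4 : B.ncard = B₀.ncard := hB.ncard_eq_ncard_of_isBase hB₀
  omega

lemma ident_ge {α : Type*} [Finite α] {M : Matroid α} {I I' J K B₀ : Set α}
    (hII' : Disjoint I I') (hJ : M.IsBasis J I) (hK : M.IsBasis K I'ᶜ) (hB₀ : M.IsBase B₀) :
    ∃ B : Set α, M.IsBase B ∧
      ((B ∩ I).ncard : ℤ) - ((B ∩ I').ncard : ℤ)
        = (J.ncard : ℤ) + (K.ncard : ℤ) - (B₀.ncard : ℤ) := by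
  have hIc : I ⊆ I'ᶜ := hII'.subset_compl_right
  obtain ⟨K', hK', hJK'⟩ := hJ.indep.subset_isBasis_of_subset (hJ.subset.trans hIc) hK.subset_ground
  obtain ⟨B, hB, hK'B⟩ := hK'.indep.exists_isBase_superset
  refine ⟨B, hB, ?_⟩
  have hBI : J = B ∩ I :=
    hJ.eq_of_subset_indep (hB.indep.inter_right I)
      (Set.subset_inter (hJK'.trans hK'B) hJ.subset) Set.inter_subset_right
  have hBI' : K' = B \ I' :=
    hK'.eq_of_subset_indep (hB.indep.diff I')
      (Set.subset_diff.mpr ⟨hK'B, Set.disjoint_left.mpr fun x hx hx' => (hK'.subset hx) hx'⟩)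
      (fun x hx => hx.2)
  have h3 : (B ∩ I').ncard + (B \ I').ncard = B.ncard :=
    Set.ncard_inter_add_ncard_diff_eq_ncard B I' B.toFinite
  have h4 : B.ncard = B₀.ncard := hB.ncard_eq_ncard_of_isBase hB₀
  have h5 : K'.ncard = K.ncard := by
    rw [Set.ncard_def, Set.ncard_def, hK'.encard_eq_encard hK]
  have h6 : (B \ I').ncard = K.ncard := by rw [← hBI', h5]
  rw [← hBI]
  omega

lemma gD_le {D : DeltaMatroid n} {M : Matroid (Fin n × Bool)} (hM : IsEnveloping M D)
    (Sp Sn : Finset (Fin n)) (c : ℤ)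
    (hc : ∀ B : Set (Fin n × Bool), M.IsBase B →
      ((B ∩ adm Sp Sn).ncard : ℤ) - ((B ∩ adm Sn Sp).ncard : ℤ) ≤ c) :
    D.g Sp Sn ≤ c := by
  rw [DeltaMatroid.g, gFam, dif_pos D.nonempty]
  apply Finset.sup'_le
  intro F hF
  have hhull : convexHull ℝ
      {x : Fin n × Bool → ℝ | ∃ B, M.IsBase B ∧ x = B.indicator fun _ => (1 : ℝ)}
      ⊆ {x : Fin n × Bool → ℝ | psi Sp Sn (envMap x) ≤ (c : ℝ)} := by
    apply convexHull_min
    · rintro x ⟨B, hB, rfl⟩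
      have h1 := hc B hB
      have h2 := psi_env_ind B Sp Sn
      simp only [Set.mem_setOf_eq, h2]
      have : (((B ∩ adm Sp Sn).ncard : ℝ)) - ((B ∩ adm Sn Sp).ncard : ℝ) ≤ (c : ℝ) := by
        exact_mod_cast h1
      exact this
    · exact convex_halfSpace_le (phi_linear Sp Sn) _
  have heF : eVec F ∈ deltaPolytope D :=
    subset_convexHull ℝ _ ⟨F, hF, rfl⟩
  rw [← hM.2] at heF
  obtain ⟨x, hx, hxe⟩ := heF
  have hle := hhull hx
  rw [Set.mem_setOf_eq, hxe, psi_eVec] at hle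
  exact_mod_cast hle

lemma base_le_gD {D : DeltaMatroid n} {M : Matroid (Fin n × Bool)} (hM : IsEnveloping M D)
    (Sp Sn : Finset (Fin n)) {B : Set (Fin n × Bool)} (hB : M.IsBase B) :
    ((B ∩ adm Sp Sn).ncard : ℤ) - ((B ∩ adm Sn Sp).ncard : ℤ) ≤ D.g Sp Sn := by
  have hmem : (B.indicator fun _ => (1 : ℝ)) ∈ convexHull ℝ
      {x : Fin n × Bool → ℝ | ∃ B', M.IsBase B' ∧ x = B'.indicator fun _ => (1 : ℝ)} :=
    subset_convexHull ℝ _ ⟨B, hB, rfl⟩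
  have himg : envMap (B.indicator fun _ => (1 : ℝ)) ∈ deltaPolytope D := by
    rw [← hM.2]; exact ⟨_, hmem, rfl⟩
  have hhull : deltaPolytope D ⊆ {y : Fin n → ℝ | psi Sp Sn y ≤ ((D.g Sp Sn : ℤ) : ℝ)} := by
    apply convexHull_min
    · rintro y ⟨F, hF, rfl⟩
      have hterm : ((Sp ∩ F).card : ℤ) + ((Sn \ F).card : ℤ)
          - ((Sn ∩ F).card : ℤ) - ((Sp \ F).card : ℤ) ≤ D.g Sp Sn := by
        rw [DeltaMatroid.g, gFam, dif_pos D.nonempty]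
        exact Finset.le_sup' (fun F : Finset (Fin n) => ((Sp ∩ F).card : ℤ) + ((Sn \ F).card : ℤ)
          - ((Sn ∩ F).card : ℤ) - ((Sp \ F).card : ℤ)) hF
      show psi Sp Sn (eVec F) ≤ _
      rw [psi_eVec]
      exact_mod_cast hterm
    · exact convex_halfSpace_le (psi_linear Sp Sn) _
  have hle := hhull himg
  rw [Set.mem_setOf_eq, psi_env_ind] at hle
  exact_mod_cast hle

lemma disjoint_adm {Sp Sn : Finset (Fin n)} (hS : Disjoint Sp Sn) :
    Disjoint (adm Sp Sn) (adm Sn Sp) := by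
  rw [Set.disjoint_left]
  rintro ⟨i, b⟩ h1 h2
  rcases h1 with ⟨hi, hb⟩ | ⟨hi, hb⟩ <;> rcases h2 with ⟨hi', hb'⟩ | ⟨hi', hb'⟩ <;>
    simp only [Set.mem_singleton_iff, Finset.mem_coe] at hi hb hi' hb'
  · exact Finset.disjoint_left.mp hS hi hi'
  · rw [hb] at hb'; exact Bool.noConfusion hb'
  · rw [hb] at hb'; exact Bool.noConfusion hb'
  · exact Finset.disjoint_left.mp hS hi' hi

lemma gD_eq {D : DeltaMatroid n} {M : Matroid (Fin n × Bool)} (hM : IsEnveloping M D)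
    {Sp Sn : Finset (Fin n)} (hS : Disjoint Sp Sn) {J K B₀ : Set (Fin n × Bool)}
    (hJ : M.IsBasis J (adm Sp Sn)) (hK : M.IsBasis K (adm Sn Sp)ᶜ) (hB₀ : M.IsBase B₀) :
    D.g Sp Sn = (J.ncard : ℤ) + (K.ncard : ℤ) - (B₀.ncard : ℤ) := by
  refine le_antisymm ?_ ?_
  · exact gD_le hM Sp Sn _ (fun B hB => ident_le hJ hK hB₀ hB)
  · obtain ⟨B, hB, hBeq⟩ := ident_ge (disjoint_adm hS) hJ hK hB₀
    rw [← hBeq]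
    exact base_le_gD hM Sp Sn hB

lemma ncard_adm (Sp Sn : Finset (Fin n)) : (adm Sp Sn).ncard = Sp.card + Sn.card := by
  have h := ncard_inter_adm (Set.univ : Set (Fin n × Bool)) Sp Sn
  rw [Set.univ_inter] at h
  simpa using h

lemma adm_mono {Sp Sn Sp' Sn' : Finset (Fin n)} (h1 : Sp' ⊆ Sp) (h2 : Sn' ⊆ Sn) :
    adm Sp' Sn' ⊆ adm Sp Sn := by
  apply Set.union_subset_union <;>
    exact Set.prod_mono (by exact_mod_cast Finset.coe_subset.mpr ‹_›) subset_rfl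

lemma gD_le_card (D : DeltaMatroid n) (Sp Sn : Finset (Fin n)) :
    D.g Sp Sn ≤ (Sp.card : ℤ) + (Sn.card : ℤ) := by
  rw [DeltaMatroid.g, gFam, dif_pos D.nonempty]
  apply Finset.sup'_le
  intro F _
  have h1 := Finset.card_inter_add_card_sdiff Sp F
  have h2 := Finset.card_inter_add_card_sdiff Sn F
  omega

lemma gD_ge_of_good (D : DeltaMatroid n) {Sp Sn F : Finset (Fin n)} (hF : F ∈ D.feas)
    (h1 : Sp ⊆ F) (h2 : Disjoint Sn F) : (Sp.card : ℤ) + (Sn.card : ℤ) ≤ D.g Sp Sn := by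
  rw [DeltaMatroid.g, gFam, dif_pos D.nonempty]
  have e1 : Sp ∩ F = Sp := Finset.inter_eq_left.mpr h1
  have e2 : Sp \ F = ∅ := Finset.sdiff_eq_empty_iff_subset.mpr h1
  have e3 : Sn ∩ F = ∅ := Finset.disjoint_iff_inter_eq_empty.mp h2
  have e4 : Sn \ F = Sn := Finset.sdiff_eq_self_of_disjoint h2
  have := Finset.le_sup' (fun F : Finset (Fin n) => ((Sp ∩ F).card : ℤ) + ((Sn \ F).card : ℤ)
      - ((Sn ∩ F).card : ℤ) - ((Sp \ F).card : ℤ)) hF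
  rw [e1, e2, e3, e4] at this
  simp only [Finset.card_empty, Nat.cast_zero, sub_zero, add_zero] at this
  exact this


lemma basis_ncard_le_base {α : Type*} [Finite α] {M : Matroid α} {K X B₀ : Set α}
    (hK : M.IsBasis K X) (hB₀ : M.IsBase B₀) : K.ncard ≤ B₀.ncard := by
  obtain ⟨B, hB, hKB⟩ := hK.indep.exists_isBase_superset
  calc K.ncard ≤ B.ncard := Set.ncard_le_ncard hKB B.toFinite
    _ = B₀.ncard := hB.ncard_eq_ncard_of_isBase hB₀

lemma gD_attained (D : DeltaMatroid n) (Sp Sn : Finset (Fin n)) :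
    ∃ F ∈ D.feas, D.g Sp Sn = ((Sp ∩ F).card : ℤ) + ((Sn \ F).card : ℤ)
      - ((Sn ∩ F).card : ℤ) - ((Sp \ F).card : ℤ) := by
  rw [DeltaMatroid.g, gFam, dif_pos D.nonempty]
  obtain ⟨F, hF, hFe⟩ := Finset.exists_mem_eq_sup' D.nonempty
    (fun F : Finset (Fin n) => ((Sp ∩ F).card : ℤ) + ((Sn \ F).card : ℤ)
      - ((Sn ∩ F).card : ℤ) - ((Sp \ F).card : ℤ))
  exact ⟨F, hF, hFe⟩

lemma indep_of_good {D : DeltaMatroid n} {M : Matroid (Fin n × Bool)} (hM : IsEnveloping M D)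
    {Sp Sn : Finset (Fin n)} (hS : Disjoint Sp Sn) {F : Finset (Fin n)} (hF : F ∈ D.feas)
    (h1 : Sp ⊆ F) (h2 : Disjoint Sn F) : M.Indep (adm Sp Sn) := by
  have hground : ∀ X : Set (Fin n × Bool), X ⊆ M.E := fun X => by
    rw [hM.1]; exact Set.subset_univ X
  obtain ⟨J, hJ⟩ := M.exists_isBasis (adm Sp Sn) (hground _)
  obtain ⟨K, hK⟩ := M.exists_isBasis (adm Sn Sp)ᶜ (hground _)
  obtain ⟨B₀, hB₀⟩ := M.exists_isBase
  have hid := gD_eq hM hS hJ hK hB₀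
  have hgge := gD_ge_of_good D hF h1 h2
  have hKB : K.ncard ≤ B₀.ncard := basis_ncard_le_base hK hB₀
  have hJle : J.ncard ≤ (adm Sp Sn).ncard := Set.ncard_le_ncard hJ.subset (Set.toFinite _)
  have hncard := ncard_adm Sp Sn
  have hle : (adm Sp Sn).ncard ≤ J.ncard := by omega
  have hEq : J = adm Sp Sn := Set.eq_of_subset_of_ncard_le hJ.subset hle (Set.toFinite _)
  exact hEq ▸ hJ.indep

lemma good_of_indep {D : DeltaMatroid n} {M : Matroid (Fin n × Bool)} (hM : IsEnveloping M D) :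
    ∀ (k : ℕ) (Sp Sn : Finset (Fin n)), Disjoint Sp Sn → Sp.card + Sn.card = k →
      M.Indep (adm Sp Sn) → ∃ F ∈ D.feas, Sp ⊆ F ∧ Disjoint Sn F := by
  have hground : ∀ X : Set (Fin n × Bool), X ⊆ M.E := fun X => by
    rw [hM.1]; exact Set.subset_univ X
  intro k
  induction k with
  | zero =>
    intro Sp Sn _ hcard _
    obtain ⟨F, hF⟩ := D.nonempty
    have h1 : Sp = ∅ := Finset.card_eq_zero.mp (by omega)
    have h2 : Sn = ∅ := Finset.card_eq_zero.mp (by omega)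
    exact ⟨F, hF, by simp [h1], by simp [h2]⟩
  | succ k ih =>
    intro Sp Sn hS hcard hInd
    obtain ⟨B₀, hB₀⟩ := M.exists_isBase
    -- get a basis `K` of `(adm Sn Sp)ᶜ` with `(B₀.ncard : ℤ) - 1 ≤ K.ncard`.
    have hKex : ∃ K : Set (Fin n × Bool), M.IsBasis K (adm Sn Sp)ᶜ ∧
        (B₀.ncard : ℤ) - 1 ≤ (K.ncard : ℤ) := by
      rcases Sp.eq_empty_or_nonempty with hSp | ⟨x, hx⟩
      · -- then Sn is nonempty
        have hSnne : Sn.Nonempty := by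
          rw [← Finset.card_pos]; rw [hSp] at hcard; simp at hcard; omega
        obtain ⟨x, hx⟩ := hSnne
        set Sn' := Sn.erase x with hSn'
        have hsub : Sn' ⊆ Sn := Finset.erase_subset _ _
        have hS' : Disjoint Sp Sn' := hS.mono_right hsub
        have hInd' : M.Indep (adm Sp Sn') := hInd.subset (adm_mono subset_rfl hsub)
        have hcard' : Sp.card + Sn'.card = k := by
          have h := Finset.card_erase_of_mem hx
          rw [← hSn'] at h
          have hxpos : 0 < Sn.card := Finset.card_pos.mpr ⟨x, hx⟩
          omega
        obtain ⟨Ft, hFt, hg1, hg2⟩ := ih Sp Sn' hS' hcard' hInd'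
        obtain ⟨K', hK'⟩ := M.exists_isBasis (adm Sn' Sp)ᶜ (hground _)
        have hid' := gD_eq hM hS' (hInd'.isBasis_self) hK' hB₀
        have hgle := gD_le_card D Sp Sn'
        have hgge := gD_ge_of_good D hFt hg1 hg2
        have hncard' := ncard_adm Sp Sn'
        have hKB : K'.ncard = B₀.ncard := by omega
        have hsub2 : K' \ {((x, true) : Fin n × Bool)} ⊆ (adm Sn Sp)ᶜ := by
          rintro ⟨i, b⟩ ⟨hyK, hy⟩ hy2
          simp only [Set.mem_singleton_iff, Prod.mk.injEq] at hy
          have hyK' := hK'.subset hyK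
          apply hyK'
          rcases hy2 with ⟨hi, hb⟩ | ⟨hi, hb⟩
          · simp only [Set.mem_singleton_iff] at hb
            have hine : i ≠ x := fun h => hy ⟨h, hb⟩
            exact Or.inl ⟨Finset.mem_coe.mpr (Finset.mem_erase.mpr ⟨hine, Finset.mem_coe.mp hi⟩),
              hb⟩
          · exact Or.inr ⟨hi, hb⟩
        obtain ⟨K, hK, hKsub⟩ :=
          (hK'.indep.diff _).subset_isBasis_of_subset hsub2 (hground _)
        refine ⟨K, hK, ?_⟩
        have ha : K' ⊆ insert ((x, true) : Fin n × Bool) (K' \ {(x, true)}) := by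
          intro y hy
          by_cases h : y = (x, true)
          · simp [h]
          · exact Set.mem_insert_of_mem _ ⟨hy, h⟩
        have hb : K'.ncard ≤ (K' \ {((x, true) : Fin n × Bool)}).ncard + 1 :=
          le_trans (Set.ncard_le_ncard ha (Set.toFinite _)) (Set.ncard_insert_le _ _)
        have hc : (K' \ {((x, true) : Fin n × Bool)}).ncard ≤ K.ncard :=
          Set.ncard_le_ncard hKsub (Set.toFinite _)
        omega
      · -- x ∈ Sp
        set Sp' := Sp.erase x with hSp'
        have hsub : Sp' ⊆ Sp := Finset.erase_subset _ _
        have hS' : Disjoint Sp' Sn := hS.mono_left hsub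
        have hInd' : M.Indep (adm Sp' Sn) := hInd.subset (adm_mono hsub subset_rfl)
        have hcard' : Sp'.card + Sn.card = k := by
          have h := Finset.card_erase_of_mem hx
          rw [← hSp'] at h
          have hxpos : 0 < Sp.card := Finset.card_pos.mpr ⟨x, hx⟩
          omega
        obtain ⟨Ft, hFt, hg1, hg2⟩ := ih Sp' Sn hS' hcard' hInd'
        obtain ⟨K', hK'⟩ := M.exists_isBasis (adm Sn Sp')ᶜ (hground _)
        have hid' := gD_eq hM hS' (hInd'.isBasis_self) hK' hB₀
        have hgle := gD_le_card D Sp' Sn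
        have hgge := gD_ge_of_good D hFt hg1 hg2
        have hncard' := ncard_adm Sp' Sn
        have hKB : K'.ncard = B₀.ncard := by omega
        have hsub2 : K' \ {((x, false) : Fin n × Bool)} ⊆ (adm Sn Sp)ᶜ := by
          rintro ⟨i, b⟩ ⟨hyK, hy⟩ hy2
          simp only [Set.mem_singleton_iff, Prod.mk.injEq] at hy
          have hyK' := hK'.subset hyK
          apply hyK'
          rcases hy2 with ⟨hi, hb⟩ | ⟨hi, hb⟩
          · exact Or.inl ⟨hi, hb⟩
          · simp only [Set.mem_singleton_iff] at hb
            have hine : i ≠ x := fun h => hy ⟨h, hb⟩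
            exact Or.inr ⟨Finset.mem_coe.mpr (Finset.mem_erase.mpr ⟨hine, Finset.mem_coe.mp hi⟩),
              hb⟩
        obtain ⟨K, hK, hKsub⟩ :=
          (hK'.indep.diff _).subset_isBasis_of_subset hsub2 (hground _)
        refine ⟨K, hK, ?_⟩
        have ha : K' ⊆ insert ((x, false) : Fin n × Bool) (K' \ {(x, false)}) := by
          intro y hy
          by_cases h : y = (x, false)
          · simp [h]
          · exact Set.mem_insert_of_mem _ ⟨hy, h⟩
        have hb : K'.ncard ≤ (K' \ {((x, false) : Fin n × Bool)}).ncard + 1 :=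
          le_trans (Set.ncard_le_ncard ha (Set.toFinite _)) (Set.ncard_insert_le _ _)
        have hc : (K' \ {((x, false) : Fin n × Bool)}).ncard ≤ K.ncard :=
          Set.ncard_le_ncard hKsub (Set.toFinite _)
        omega
    obtain ⟨K, hK, hKcard⟩ := hKex
    have hid := gD_eq hM hS (hInd.isBasis_self) hK hB₀
    have hncard := ncard_adm Sp Sn
    obtain ⟨F₀, hF₀, hgF⟩ := gD_attained D Sp Sn
    have c1 := Finset.card_inter_add_card_sdiff Sp F₀
    have c2 := Finset.card_inter_add_card_sdiff Sn F₀
    have key1 : (Sp \ F₀).card = 0 ∧ (Sn ∩ F₀).card = 0 := by omega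
    refine ⟨F₀, hF₀, ?_, ?_⟩
    · exact Finset.sdiff_eq_empty_iff_subset.mp (Finset.card_eq_zero.mp key1.1)
    · exact Finset.disjoint_iff_inter_eq_empty.mpr (Finset.card_eq_zero.mp key1.2)

end EnvelopingAux



/-- **Proposition (independent sets of an enveloping matroid).** If `M` is an enveloping matroid
for `D`, then an admissible set `S = (Sp, Sn)` is independent in `M` (as the subset
`Sp×{+} ∪ Sn×{−}` of `[n]×{+,−}`) if and only if `S` is independent in `D`. -/
theorem deltaMatroid_enveloping_indep (n : ℕ) (D : DeltaMatroid n)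
    (M : Matroid (Fin n × Bool)) (hM : IsEnveloping M D)
    (Sp Sn : Finset (Fin n)) (hS : Disjoint Sp Sn) :
    M.Indep (((↑Sp : Set (Fin n)) ×ˢ ({true} : Set Bool))
        ∪ ((↑Sn : Set (Fin n)) ×ˢ ({false} : Set Bool)))
      ↔ ∃ F ∈ D.feas, Sp ⊆ F ∧ Disjoint Sn F := by
  constructor
  · intro hInd
    exact good_of_indep hM (Sp.card + Sn.card) Sp Sn hS rfl hInd
  · rintro ⟨F, hF, h1, h2⟩
    exact indep_of_good hM hS hF h1 h2
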